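/- 3/2-stable heavy-traffic marginal: for φ(s) = rs + √2 s^{3/2} with inverse ψ, one has ψ(sε²(r-ε)) = sε² - (1+√(2s))·(sε³/r) + o(ε³) as ε ↓ 0 for fixed s > 0, and consequently (ε/(r-ε)) · ψ(sε²(r-ε))/(sε² - ψ(sε²(r-ε))) → 1/(1+√(2s)) as ε ↓ 0. -/

import Mathlib

open Real Filter Topology Asymptotics

lemma rpow32 (a : ℝ) (ha : 0 ≤ a) : a ^ (3/2 : ℝ) = Real.sqrt a ^ 3 := by
  rw [Real.sqrt_eq_rpow, ← Real.rpow_natCast (a ^ (1/2:ℝ)) 3, ← Real.rpow_mul ha]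
  norm_num

lemma rpow32' (s : ℝ) (hs : 0 ≤ s) : s ^ (3/2:ℝ) = s * Real.sqrt s := by
  rw [rpow32 s hs, pow_succ, Real.sq_sqrt hs]

lemma eps32 (s ε : ℝ) (hs : 0 ≤ s) (hε : 0 ≤ ε) :
    (s * ε^2) ^ (3/2 : ℝ) = s ^ (3/2:ℝ) * ε^3 := by
  rw [Real.mul_rpow hs (sq_nonneg ε), rpow32 (ε^2) (sq_nonneg ε), Real.sqrt_sq hε]

lemma key (r s : ℝ) (hr : 0 < r) (hs : 0 < s) (ε : ℝ) (hε : 0 < ε) (hεr : ε < r)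
    (y : ℝ) (hy0 : 0 ≤ y)
    (hyeq : r * y + Real.sqrt 2 * y ^ (3/2:ℝ) = s*ε^2*(r-ε)) :
    y ≤ s*ε^2 ∧
      |y - (s*ε^2 - (1 + Real.sqrt (2*s)) * (s*ε^3/r))| ≤
        (3 * Real.sqrt 2 * Real.sqrt s * ((s + Real.sqrt 2 * s^(3/2:ℝ))/r) / r) * ε^4 := by
  have ha : 0 < s*ε^2 := by positivity
  have hy32 : (0:ℝ) ≤ y ^ (3/2:ℝ) := Real.rpow_nonneg hy0 _
  have hε3 : 0 < s*ε^3 := by positivity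
  have hya : y ≤ s*ε^2 := by
    nlinarith [hy32, mul_nonneg (Real.sqrt_nonneg 2) hy32]
  have hy32a : y ^ (3/2:ℝ) ≤ (s*ε^2) ^ (3/2:ℝ) :=
    Real.rpow_le_rpow hy0 hya (by norm_num)
  have ha32 : (s*ε^2) ^ (3/2:ℝ) = s^(3/2:ℝ) * ε^3 := eps32 s ε hs.le hε.le
  have hs32 : s^(3/2:ℝ) = s * Real.sqrt s := rpow32' s hs.le
  have h2s : Real.sqrt (2*s) = Real.sqrt 2 * Real.sqrt s := Real.sqrt_mul (by norm_num) s
  have hC : s*ε^2 - y ≤ ((s + Real.sqrt 2 * s^(3/2:ℝ))/r) * ε^3 := by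
    have h2 : Real.sqrt 2 * y ^ (3/2:ℝ) ≤ Real.sqrt 2 * (s^(3/2:ℝ) * ε^3) := by
      rw [← ha32]; exact mul_le_mul_of_nonneg_left hy32a (Real.sqrt_nonneg 2)
    rw [div_mul_eq_mul_div, le_div_iff₀ hr]
    nlinarith
  set E := y - (s*ε^2 - (1 + Real.sqrt (2*s)) * (s*ε^3/r)) with hE_def
  have hrE : r * E = Real.sqrt 2 * ((s*ε^2) ^ (3/2:ℝ) - y ^ (3/2:ℝ)) := by
    rw [hE_def]
    have hr' : r ≠ 0 := hr.ne'
    rw [h2s]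
    field_simp
    linear_combination hyeq - Real.sqrt 2 * ha32 - Real.sqrt 2 * ε^3 * hs32
  have hu := Real.sqrt_nonneg (s*ε^2)
  have hv := Real.sqrt_nonneg y
  have huv : Real.sqrt y ≤ Real.sqrt (s*ε^2) := Real.sqrt_le_sqrt hya
  have hu2 : Real.sqrt (s*ε^2) ^ 2 = s*ε^2 := Real.sq_sqrt ha.le
  have hv2 : Real.sqrt y ^ 2 = y := Real.sq_sqrt hy0
  have hdiff : (s*ε^2) ^ (3/2:ℝ) - y ^ (3/2:ℝ) ≤ 3 * Real.sqrt (s*ε^2) * (s*ε^2 - y) := by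
    rw [rpow32 (s*ε^2) ha.le, rpow32 y hy0]
    nlinarith [mul_nonneg (mul_nonneg (sub_nonneg.2 huv) (sub_nonneg.2 huv))
      (by positivity : (0:ℝ) ≤ 2*Real.sqrt (s*ε^2) + Real.sqrt y)]
  have hsa : Real.sqrt (s*ε^2) = Real.sqrt s * ε := by
    rw [Real.sqrt_mul hs.le, Real.sqrt_sq hε.le]
  have hE0 : 0 ≤ E := by
    have h0 : 0 ≤ r * E := hrE ▸ mul_nonneg (Real.sqrt_nonneg 2) (sub_nonneg.2 hy32a)
    by_contra h
    push_neg at h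
    nlinarith [mul_pos hr (neg_pos.2 h)]
  have hEb : E ≤ (3 * Real.sqrt 2 * Real.sqrt s * ((s + Real.sqrt 2 * s^(3/2:ℝ))/r) / r) * ε^4 := by
    have hC' : 0 ≤ s*ε^2 - y := by linarith
    have step : Real.sqrt 2 * ((s*ε^2) ^ (3/2:ℝ) - y ^ (3/2:ℝ)) ≤
        Real.sqrt 2 * (3 * (Real.sqrt s * ε) * (((s + Real.sqrt 2 * s^(3/2:ℝ))/r) * ε^3)) := by
      apply mul_le_mul_of_nonneg_left _ (Real.sqrt_nonneg 2)
      calc (s*ε^2) ^ (3/2:ℝ) - y ^ (3/2:ℝ) ≤ 3 * Real.sqrt (s*ε^2) * (s*ε^2 - y) := hdiff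
        _ ≤ 3 * (Real.sqrt s * ε) * (((s + Real.sqrt 2 * s^(3/2:ℝ))/r) * ε^3) := by
            rw [hsa]
            apply mul_le_mul_of_nonneg_left hC (by positivity)
    rw [← hrE] at step
    calc E = (r * E) / r := by field_simp
      _ ≤ (Real.sqrt 2 * (3 * (Real.sqrt s * ε) *
            (((s + Real.sqrt 2 * s^(3/2:ℝ))/r) * ε^3))) / r :=
          div_le_div_of_nonneg_right step hr.le
      _ = _ := by ring
  constructor
  · exact hya
  · rw [abs_of_nonneg hE0]; exact hEb

/-- 3/2-stable heavy-traffic marginal: for φ(s) = rs + √2 s^{3/2} with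
inverse ψ, ψ(sε²(r-ε)) = sε² - (1+√(2s))·(sε³/r) + o(ε³) as ε ↓ 0, and consequently
(ε/(r-ε))·ψ(sε²(r-ε))/(sε² - ψ(sε²(r-ε))) → 1/(1+√(2s)). -/
theorem stmt_19 (r s : ℝ) (hr : 0 < r) (hs : 0 < s)
    (φ ψ : ℝ → ℝ)
    (hφ : ∀ x : ℝ, φ x = r * x + Real.sqrt 2 * x ^ (3/2 : ℝ))
    (hψ : ∀ x : ℝ, 0 ≤ x → 0 ≤ ψ x ∧ φ (ψ x) = x) :
    ((fun ε : ℝ => ψ (s*ε^2*(r-ε)) - (s*ε^2 - (1 + Real.sqrt (2*s)) * (s*ε^3/r)))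
        =o[𝓝[>] 0] fun ε => ε^3) ∧
    Tendsto (fun ε : ℝ =>
        (ε/(r-ε)) * (ψ (s*ε^2*(r-ε)) / (s*ε^2 - ψ (s*ε^2*(r-ε)))))
      (𝓝[>] 0) (𝓝 (1 / (1 + Real.sqrt (2*s)))) := by
  set K : ℝ := 3 * Real.sqrt 2 * Real.sqrt s * ((s + Real.sqrt 2 * s^(3/2:ℝ))/r) / r with hK
  set L : ℝ := (1 + Real.sqrt (2*s)) * s / r with hL
  have hmem : Set.Ioo (0:ℝ) r ∈ 𝓝[>] (0:ℝ) := Ioo_mem_nhdsGT_of_mem ⟨le_refl 0, hr⟩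
  have hfact : ∀ᶠ ε in 𝓝[>] (0:ℝ), 0 < ε ∧ ε < r ∧
      ψ (s*ε^2*(r-ε)) ≤ s*ε^2 ∧ 0 ≤ ψ (s*ε^2*(r-ε)) ∧
      |ψ (s*ε^2*(r-ε)) - (s*ε^2 - (1+Real.sqrt (2*s))*(s*ε^3/r))| ≤ K * ε^4 := by
    filter_upwards [hmem] with ε hε
    obtain ⟨hε0, hεr⟩ := hε
    have hx0 : 0 ≤ s*ε^2*(r-ε) := mul_nonneg (by positivity) (by linarith)
    obtain ⟨hy0, hyφ⟩ := hψ _ hx0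
    rw [hφ] at hyφ
    obtain ⟨h1, h2⟩ := key r s hr hs ε hε0 hεr _ hy0 hyφ
    exact ⟨hε0, hεr, h1, hy0, h2⟩
  have h1 : Tendsto (fun ε : ℝ => ε) (𝓝[>] (0:ℝ)) (𝓝 0) :=
    tendsto_id.mono_left nhdsWithin_le_nhds
  have hbigO : (fun ε : ℝ => ψ (s*ε^2*(r-ε)) - (s*ε^2 - (1 + Real.sqrt (2*s)) * (s*ε^3/r)))
      =O[𝓝[>] (0:ℝ)] (fun ε => ε^4) := by
    apply IsBigO.of_bound K
    filter_upwards [hfact] with ε h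
    obtain ⟨hε0, -, -, -, hb⟩ := h
    rw [Real.norm_eq_abs, Real.norm_eq_abs, abs_pow, abs_of_pos hε0]
    exact hb
  have h43 : (fun ε : ℝ => ε^4) =o[𝓝[>] (0:ℝ)] fun ε => ε^3 := by
    have h2 : (fun ε : ℝ => ε) =o[𝓝[>] (0:ℝ)] (fun _ => (1:ℝ)) :=
      (isLittleO_one_iff ℝ).2 h1
    have h3 := h2.mul_isBigO (isBigO_refl (fun ε : ℝ => ε^3) (𝓝[>] (0:ℝ)))
    simpa [pow_succ, mul_comm, one_mul] using h3
  refine ⟨hbigO.trans_isLittleO h43, ?_⟩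
  have hE_small : Tendsto (fun ε : ℝ =>
      (ψ (s*ε^2*(r-ε)) - (s*ε^2 - (1+Real.sqrt (2*s))*(s*ε^3/r)))/ε^3)
      (𝓝[>] (0:ℝ)) (𝓝 0) := by
    have hbound : ∀ᶠ ε in 𝓝[>] (0:ℝ),
        ‖(ψ (s*ε^2*(r-ε)) - (s*ε^2 - (1+Real.sqrt (2*s))*(s*ε^3/r)))/ε^3‖ ≤ K * ε := by
      filter_upwards [hfact] with ε h
      obtain ⟨hε0, -, -, -, hb⟩ := h
      rw [Real.norm_eq_abs, abs_div, abs_pow, abs_of_pos hε0,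
        div_le_iff₀ (by positivity : (0:ℝ) < ε^3)]
      calc |ψ (s*ε^2*(r-ε)) - (s*ε^2 - (1+Real.sqrt (2*s))*(s*ε^3/r))| ≤ K * ε^4 := hb
        _ = K * ε * ε^3 := by ring
    have hKε : Tendsto (fun ε : ℝ => K * ε) (𝓝[>] (0:ℝ)) (𝓝 0) := by
      simpa using tendsto_const_nhds.mul h1
    exact squeeze_zero_norm' hbound hKε
  have hg : Tendsto (fun ε : ℝ => (s*ε^2 - ψ (s*ε^2*(r-ε)))/ε^3) (𝓝[>] (0:ℝ)) (𝓝 L) := by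
    have heq : ∀ᶠ ε in 𝓝[>] (0:ℝ), L -
        (ψ (s*ε^2*(r-ε)) - (s*ε^2 - (1+Real.sqrt (2*s))*(s*ε^3/r)))/ε^3
        = (s*ε^2 - ψ (s*ε^2*(r-ε)))/ε^3 := by
      filter_upwards [hfact] with ε h
      obtain ⟨hε0, -, -, -, -⟩ := h
      rw [hL]
      field_simp
      try ring
    have hlim : Tendsto (fun ε : ℝ => L -
        (ψ (s*ε^2*(r-ε)) - (s*ε^2 - (1+Real.sqrt (2*s))*(s*ε^3/r)))/ε^3)
        (𝓝[>] (0:ℝ)) (𝓝 L) := by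
      simpa using tendsto_const_nhds.sub hE_small
    exact hlim.congr' heq
  have hy2 : Tendsto (fun ε : ℝ => ψ (s*ε^2*(r-ε))/ε^2) (𝓝[>] (0:ℝ)) (𝓝 s) := by
    have heq : ∀ᶠ ε in 𝓝[>] (0:ℝ),
        s - ε * ((s*ε^2 - ψ (s*ε^2*(r-ε)))/ε^3) = ψ (s*ε^2*(r-ε))/ε^2 := by
      filter_upwards [hfact] with ε h
      obtain ⟨hε0, -, -, -, -⟩ := h
      field_simp
      try ring
    have hlim : Tendsto (fun ε : ℝ => s - ε * ((s*ε^2 - ψ (s*ε^2*(r-ε)))/ε^3))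
        (𝓝[>] (0:ℝ)) (𝓝 s) := by
      simpa using tendsto_const_nhds.sub (h1.mul hg)
    exact hlim.congr' heq
  have hden : Tendsto (fun ε : ℝ => (r - ε) * ((s*ε^2 - ψ (s*ε^2*(r-ε)))/ε^3))
      (𝓝[>] (0:ℝ)) (𝓝 (r * L)) := by
    simpa using (tendsto_const_nhds.sub h1).mul hg
  have hsq : (0:ℝ) < 1 + Real.sqrt (2*s) := by positivity
  have hrL : r * L ≠ 0 := by
    have h9 : r * L = (1 + Real.sqrt (2*s)) * s := by rw [hL]; field_simp
    rw [h9]; positivity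
  have hfin := hy2.div hden hrL
  have hlimeq : s / (r * L) = 1 / (1 + Real.sqrt (2*s)) := by
    rw [hL]
    field_simp
    try ring
  rw [hlimeq] at hfin
  apply hfin.congr'
  filter_upwards [hfact] with ε h
  obtain ⟨hε0, hεr, hya, hy0, -⟩ := h
  have hε3 : (ε:ℝ)^3 ≠ 0 := by positivity
  have hrε : r - ε ≠ 0 := by linarith [hεr]
  by_cases hd : s*ε^2 - ψ (s*ε^2*(r-ε)) = 0
  · simp [hd]
  · rw [Pi.div_apply]
    field_simp
    try ring
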